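/- Let k be a reproducing kernel on X that is equivariant with respect to a compact group G with Haar measure λ in the sense that ∫_G k(g·x, x') λ(dg) = ∫_G k(x, g·x') λ(dg) for all x, x'. Then for any probability measure P on X with orbit average P°, the squared maximum mean discrepancy satisfies MMD²(P, P°) = ∬ k(x,x') P(dx)P(dx') − ∬∫_G k(x, g·x') λ(dg) P(dx)P(dx'). -/

import Mathlib

open MeasureTheory

/-- For a kernel `k` equivariant with respect to the Haar measure `μ` of a compact group `G`
(`∫_G k(g·x, x') dμ = ∫_G k(x, g·x') dμ`), the squared MMD between `P` and its orbit average
`P°` satisfies `MMD²(P, P°) = ∬ k dP dP − ∬ ∫_G k(x, g·x') dμ dP dP`.  The left-hand side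
below is the expansion `∬ k dP dP + ∬ k dP° dP° − 2 ∬ k dP dP°` written via `μ`. -/
theorem mmd_orbitAverage_equivariant_kernel {G X : Type*} [Group G] [TopologicalSpace G]
    [IsTopologicalGroup G] [CompactSpace G] [MeasurableSpace G] [BorelSpace G]
    [MulAction G X] [MeasurableSpace X] [MeasurableSMul₂ G X]
    (μ : Measure G) [IsProbabilityMeasure μ] [μ.IsMulLeftInvariant] [μ.IsMulRightInvariant]
    (P : Measure X) [IsProbabilityMeasure P]
    (k : X → X → ℝ) (hk : Measurable (Function.uncurry k))
    (hbd : ∃ C : ℝ, ∀ x y : X, |k x y| ≤ C)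
    (hequiv : ∀ x x' : X, ∫ g, k (g • x) x' ∂μ = ∫ g, k x (g • x') ∂μ) :
    (∫ x, ∫ y, k x y ∂P ∂P)
        + (∫ x, ∫ y, ∫ g, ∫ h, k (g • x) (h • y) ∂μ ∂μ ∂P ∂P)
        - 2 * ∫ x, ∫ y, ∫ g, k x (g • y) ∂μ ∂P ∂P
      = (∫ x, ∫ y, k x y ∂P ∂P) - ∫ x, ∫ y, ∫ g, k x (g • y) ∂μ ∂P ∂P := by
  have key : ∀ x y : X, ∫ g, ∫ h, k (g • x) (h • y) ∂μ ∂μ = ∫ g, k x (g • y) ∂μ := by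
    intro x y
    have h1 : ∀ g : G, ∫ h, k (g • x) (h • y) ∂μ = ∫ h, k x (h • y) ∂μ := by
      intro g
      rw [← hequiv (g • x) y]
      calc ∫ h, k (h • g • x) y ∂μ = ∫ h, k ((h * g) • x) y ∂μ := by
            simp only [smul_smul]
        _ = ∫ h, k (h • x) y ∂μ := integral_mul_right_eq_self (fun h => k (h • x) y) g
        _ = ∫ h, k x (h • y) ∂μ := hequiv x y
    simp only [h1, integral_const, measure_univ, ENNReal.toReal_one, probReal_univ, one_smul]
  simp only [key]
  ring
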